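/- Let Γ₂, M̃, B, Γ₁ be fixed 2n×2n real matrices with Γ₂, M̃ symmetric and with B − Γ₁ symmetric positive semidefinite, and let C : [0,∞) → ℝ^{2n×2n} be continuous. Let G : [0,∞) → ℝ^{2n×2n} solve the matrix Riccati equation dG/dt = (Γ₂ + M̃ − C(t)ᵀ)G + G(Γ₂ + M̃ − C(t)) + G(Γ₁ − B)G with G(0) symmetric positive definite. Then G(t) is symmetric positive definite for all t ≥ 0, and Σ(t) := G(t)⁻¹ solves the differential Lyapunov equation dΣ/dt = −Σ(Γ₂ + M̃ − C(t)ᵀ) − (Γ₂ + M̃ − C(t))Σ − (Γ₁ − B) with Σ(0) = G(0)⁻¹. -/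

import Mathlib

open Matrix Set Filter

set_option linter.unusedSectionVars false
set_option linter.unusedVariables false
set_option maxHeartbeats 2000000

variable {ι : Type*} [Fintype ι] [DecidableEq ι]

lemma sum_abs_sq_le (x : ι → ℝ) :
    (∑ i, |x i|) * (∑ i, |x i|) ≤ (Fintype.card ι : ℝ) * (x ⬝ᵥ x) := by
  have h := sq_sum_le_card_mul_sum_sq (s := (Finset.univ : Finset ι))
    (f := fun i => |x i|)
  simp only [sq] at h
  calc (∑ i, |x i|) * (∑ i, |x i|) ≤ (Finset.univ.card : ℝ) * ∑ i, |x i| * |x i| := h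
    _ = (Fintype.card ι : ℝ) * (x ⬝ᵥ x) := by
        rw [dotProduct, Finset.card_univ]
        congr 1
        exact Finset.sum_congr rfl fun i _ => abs_mul_abs_self _

/-- entrywise bound gives quadratic form bound -/
lemma quad_abs_le (M : Matrix ι ι ℝ) {e : ℝ} (he : 0 ≤ e)
    (h : ∀ i j, |M i j| ≤ e) (x : ι → ℝ) :
    |x ⬝ᵥ M *ᵥ x| ≤ (Fintype.card ι * e) * (x ⬝ᵥ x) := by
  have h2 : ∀ i, |(M *ᵥ x) i| ≤ e * ∑ j, |x j| := by
    intro i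
    rw [Matrix.mulVec, dotProduct]
    refine (Finset.abs_sum_le_sum_abs _ _).trans ?_
    rw [Finset.mul_sum]
    refine Finset.sum_le_sum fun j _ => ?_
    rw [abs_mul]
    exact mul_le_mul_of_nonneg_right (h i j) (abs_nonneg _)
  have h1 : |x ⬝ᵥ M *ᵥ x| ≤ (∑ i, |x i|) * (e * ∑ j, |x j|) := by
    rw [dotProduct, Finset.sum_mul]
    refine (Finset.abs_sum_le_sum_abs _ _).trans (Finset.sum_le_sum fun i _ => ?_)
    rw [abs_mul]
    exact mul_le_mul_of_nonneg_left (h2 i) (abs_nonneg _)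
  calc |x ⬝ᵥ M *ᵥ x| ≤ (∑ i, |x i|) * (e * ∑ j, |x j|) := h1
    _ = e * ((∑ i, |x i|) * (∑ i, |x i|)) := by ring
    _ ≤ e * ((Fintype.card ι : ℝ) * (x ⬝ᵥ x)) := by
        exact mul_le_mul_of_nonneg_left (sum_abs_sq_le x) he
    _ = (Fintype.card ι * e) * (x ⬝ᵥ x) := by ring

lemma dv_symm (P : Matrix ι ι ℝ) (hP : Pᵀ = P) (u v : ι → ℝ) :
    u ⬝ᵥ P *ᵥ v = v ⬝ᵥ P *ᵥ u := by
  rw [dotProduct_mulVec, ← vecMul_transpose, hP, dotProduct_comm]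

/-- Cauchy-Schwarz for positive semidefinite quadratic forms -/
lemma cs_posSemidef (P : Matrix ι ι ℝ) (hP : P.PosSemidef) (x y : ι → ℝ) :
    (x ⬝ᵥ P *ᵥ y) ^ 2 ≤ (x ⬝ᵥ P *ᵥ x) * (y ⬝ᵥ P *ᵥ y) := by
  have hPs : Pᵀ = P := by
    have := hP.1
    rwa [Matrix.IsHermitian, conjTranspose_eq_transpose_of_trivial] at this
  have hsym := dv_symm P hPs
  have hq : ∀ t : ℝ, 0 ≤ (y ⬝ᵥ P *ᵥ y) * (t * t) + (2 * (x ⬝ᵥ P *ᵥ y)) * t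
      + x ⬝ᵥ P *ᵥ x := by
    intro t
    have h0 := hP.dotProduct_mulVec_nonneg (x + t • y)
    rw [star_trivial] at h0
    calc (0:ℝ) ≤ (x + t • y) ⬝ᵥ P *ᵥ (x + t • y) := h0
      _ = (y ⬝ᵥ P *ᵥ y) * (t * t) + (2 * (x ⬝ᵥ P *ᵥ y)) * t + x ⬝ᵥ P *ᵥ x := by
          rw [mulVec_add, mulVec_smul, add_dotProduct, smul_dotProduct,
            dotProduct_add, dotProduct_add, dotProduct_smul, dotProduct_smul,
            hsym y x]
          simp only [smul_eq_mul]
          ring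
  have hd := discrim_le_zero hq
  rw [discrim] at hd
  nlinarith [hd]

lemma dotProduct_self_nonneg' (x : ι → ℝ) : 0 ≤ x ⬝ᵥ x :=
  Finset.sum_nonneg fun i _ => mul_self_nonneg _

/-- lower bound on the quadratic form of a posdef matrix from an entrywise
bound on its inverse -/
lemma quad_lower (P : Matrix ι ι ℝ) (hP : P.PosDef) {m : ℝ} (hm : 0 < m)
    (hent : ∀ i j, |P⁻¹ i j| ≤ m) (x : ι → ℝ) :
    x ⬝ᵥ x ≤ ((Fintype.card ι : ℝ) * m) * (x ⬝ᵥ P *ᵥ x) := by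
  have hPx : 0 ≤ x ⬝ᵥ P *ᵥ x := by
    have := hP.posSemidef.dotProduct_mulVec_nonneg x
    rwa [star_trivial] at this
  by_cases hx : x = 0
  · simp [hx]
  have hdet : IsUnit (P.det) := hP.det_pos.ne'.isUnit
  have h1 : P *ᵥ (P⁻¹ *ᵥ x) = x := by
    rw [mulVec_mulVec, Matrix.mul_nonsing_inv _ hdet, one_mulVec]
  have hcs := cs_posSemidef P hP.posSemidef x (P⁻¹ *ᵥ x)
  rw [h1] at hcs
  have h2 : (P⁻¹ *ᵥ x) ⬝ᵥ x = x ⬝ᵥ P⁻¹ *ᵥ x := dotProduct_comm _ _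
  rw [h2] at hcs
  have h3 : x ⬝ᵥ P⁻¹ *ᵥ x ≤ ((Fintype.card ι : ℝ) * m) * (x ⬝ᵥ x) :=
    (le_abs_self _).trans (quad_abs_le _ hm.le hent x)
  have hxx : 0 < x ⬝ᵥ x :=
    lt_of_le_of_ne (dotProduct_self_nonneg' x)
      (fun h => hx (dotProduct_self_eq_zero.mp h.symm))
  nlinarith [hcs, h3, hxx, hPx]

section InvDeriv

attribute [local instance] Matrix.linftyOpNormedRing Matrix.linftyOpNormedAlgebra

noncomputable local instance : CompleteSpace (Matrix ι ι ℝ) :=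
  (by infer_instance : CompleteSpace (ι → ι → ℝ))

lemma abs_entry_le_linfty (M : Matrix ι ι ℝ) (i j : ι) : |M i j| ≤ ‖M‖ := by
  have h1 : ‖M i j‖₊ ≤ ∑ j', ‖M i j'‖₊ :=
    Finset.single_le_sum (f := fun j' => ‖M i j'‖₊) (fun _ _ => zero_le) (Finset.mem_univ j)
  have h2 : (∑ j', ‖M i j'‖₊) ≤ Finset.univ.sup fun i' => ∑ j', ‖M i' j'‖₊ :=
    Finset.le_sup (f := fun i' => ∑ j', ‖M i' j'‖₊) (Finset.mem_univ i)
  have := (h1.trans h2)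
  rw [← Matrix.linfty_opNNNorm_def] at this
  calc |M i j| = (‖M i j‖₊ : ℝ) := rfl
    _ ≤ (‖M‖₊ : ℝ) := by exact_mod_cast this
    _ = ‖M‖ := rfl

/-- entrywise derivatives give a matrix-valued derivative -/
lemma hasDerivWithinAt_matrix {F : ℝ → Matrix ι ι ℝ} {F' : Matrix ι ι ℝ}
    {s : Set ℝ} {t : ℝ}
    (h : ∀ i j, HasDerivWithinAt (fun u => F u i j) (F' i j) s t) :
    HasDerivWithinAt F F' s t := by
  have h1 : HasDerivWithinAt
      (fun u => ∑ i, ∑ j, (F u i j) • single i j (1:ℝ))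
      (∑ i, ∑ j, (F' i j) • single i j (1:ℝ)) s t :=
    HasDerivWithinAt.fun_sum fun i _ => HasDerivWithinAt.fun_sum fun j _ =>
      (h i j).smul_const _
  have e : ∀ (M : Matrix ι ι ℝ), ∑ i, ∑ j, (M i j) • single i j (1:ℝ) = M := by
    intro M
    conv_rhs => rw [matrix_eq_sum_single M]
    refine Finset.sum_congr rfl fun i _ => Finset.sum_congr rfl fun j _ => ?_
    rw [smul_single, smul_eq_mul, mul_one]
  have : (fun u => ∑ i, ∑ j, (F u i j) • single i j (1:ℝ)) = F := by
    funext u; exact e (F u)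
  rw [this, e F'] at h1
  exact h1

lemma entry_hasDerivWithinAt {F : ℝ → Matrix ι ι ℝ} {F' : Matrix ι ι ℝ}
    {s : Set ℝ} {t : ℝ} (h : HasDerivWithinAt F F' s t) (i j : ι) :
    HasDerivWithinAt (fun u => F u i j) (F' i j) s t := by
  let lm : Matrix ι ι ℝ →ₗ[ℝ] ℝ :=
    { toFun := fun M => M i j
      map_add' := fun _ _ => rfl
      map_smul' := fun _ _ => rfl }
  let clm : Matrix ι ι ℝ →L[ℝ] ℝ :=
    LinearMap.mkContinuous lm 1 (fun M => by
      show ‖M i j‖ ≤ 1 * ‖M‖; simpa using abs_entry_le_linfty M i j)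
  exact (clm.hasFDerivAt).comp_hasDerivWithinAt t h

/-- derivative of the inverse of a matrix-valued function, entrywise -/
lemma entrywise_deriv_inv {F : ℝ → Matrix ι ι ℝ} {F' : Matrix ι ι ℝ}
    {s : Set ℝ} {t : ℝ} (hunit : IsUnit (F t))
    (h : ∀ i j, HasDerivWithinAt (fun u => F u i j) (F' i j) s t) (i j : ι) :
    HasDerivWithinAt (fun u => (F u)⁻¹ i j)
      ((-((F t)⁻¹ * F' * (F t)⁻¹)) i j) s t := by
  have hF : HasDerivWithinAt F F' s t := hasDerivWithinAt_matrix h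
  have hinv : HasFDerivAt Ring.inverse
      (-ContinuousLinearMap.mulLeftRight ℝ (Matrix ι ι ℝ) ↑hunit.unit⁻¹ ↑hunit.unit⁻¹) (F t) := by
    have := hasFDerivAt_ringInverse (𝕜 := ℝ) hunit.unit
    rwa [IsUnit.unit_spec] at this
  have hcomp := hinv.comp_hasDerivWithinAt t hF
  have hval : ↑hunit.unit⁻¹ = (F t)⁻¹ := by
    rw [Matrix.nonsing_inv_eq_ringInverse, ← Ring.inverse_unit hunit.unit,
      IsUnit.unit_spec]
  have hcomp' : HasDerivWithinAt (fun u => (F u)⁻¹)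
      (-((F t)⁻¹ * F' * (F t)⁻¹)) s t := by
    have hfun : (Ring.inverse ∘ F) = fun u => (F u)⁻¹ := by
      funext u
      simp [Function.comp, Matrix.nonsing_inv_eq_ringInverse]
    rw [hfun] at hcomp
    refine hcomp.congr_deriv ?_
    rw [← hval]
    simp
  exact entry_hasDerivWithinAt hcomp' i j

end InvDeriv

lemma abs_le_pi2norm (g : ι → ι → ℝ) (i j : ι) : |g i j| ≤ ‖g‖ := by
  calc |g i j| = ‖g i j‖ := rfl
    _ ≤ ‖g i‖ := norm_le_pi_norm (g i) j
    _ ≤ ‖g‖ := norm_le_pi_norm g i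

lemma pi2norm_le {g : ι → ι → ℝ} {c : ℝ} (hc : 0 ≤ c) (h : ∀ i j, |g i j| ≤ c) :
    ‖g‖ ≤ c :=
  (pi_norm_le_iff_of_nonneg hc).2 fun i =>
    (pi_norm_le_iff_of_nonneg hc).2 fun j => h i j

lemma entry_mul_le (M N : Matrix ι ι ℝ) {a b : ℝ} (ha : 0 ≤ a)
    (hM : ∀ i j, |M i j| ≤ a) (hN : ∀ i j, |N i j| ≤ b) (i j : ι) :
    |(M * N) i j| ≤ (Fintype.card ι : ℝ) * a * b := by
  rw [Matrix.mul_apply]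
  refine (Finset.abs_sum_le_sum_abs _ _).trans ?_
  calc ∑ k, |M i k * N k j| ≤ ∑ _k : ι, a * b := by
        refine Finset.sum_le_sum fun k _ => ?_
        rw [abs_mul]
        exact mul_le_mul (hM i k) (hN k j) (abs_nonneg _) ha
    _ = (Fintype.card ι : ℝ) * a * b := by
        rw [Finset.sum_const, Finset.card_univ, nsmul_eq_mul, mul_assoc]

/-- bound on entries of a continuous matrix family over a compact set -/
lemma exists_entry_bound (f : ℝ → Matrix ι ι ℝ) (s : Set ℝ) (hs : IsCompact s)
    (hf : ∀ i j, ContinuousOn (fun t => f t i j) s) :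
    ∃ a : ℝ, 0 ≤ a ∧ ∀ t ∈ s, ∀ i j, |f t i j| ≤ a := by
  have hF : ContinuousOn (fun t => (fun i j => f t i j : ι → ι → ℝ)) s :=
    continuousOn_pi.2 fun i => continuousOn_pi.2 fun j => hf i j
  obtain ⟨c, hc⟩ := hs.exists_bound_of_continuousOn hF
  refine ⟨max c 0, le_max_right _ _, fun t ht i j => ?_⟩
  exact (abs_le_pi2norm (fun i j => f t i j) i j).trans
    ((hc t ht).trans (le_max_left _ _))

/-- Gronwall inequality specialized to entrywise matrix functions -/
lemma gron (f f' : ℝ → (ι → ι → ℝ)) {b Kc εc δ : ℝ}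
    (hcont : ContinuousOn f (Icc 0 b))
    (hder : ∀ t ∈ Ico 0 b, ∀ i j,
      HasDerivWithinAt (fun u => f u i j) (f' t i j) (Ici t) t)
    (hbound : ∀ t ∈ Ico 0 b, ‖f' t‖ ≤ Kc * ‖f t‖ + εc)
    (hδ : ‖f 0‖ ≤ δ) :
    ∀ t ∈ Icc 0 b, ‖f t‖ ≤ gronwallBound δ Kc εc t := by
  intro t ht
  have := norm_le_gronwallBound_of_norm_deriv_right_le hcont
    (fun u hu => hasDerivWithinAt_pi.2 fun i =>
      hasDerivWithinAt_pi.2 fun j => hder u hu i j) hδ hbound t ht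
  simpa using this

lemma isSymm_of_riccati (A : ℝ → Matrix ι ι ℝ) (K' : Matrix ι ι ℝ)
    (hK' : K'ᵀ = K')
    (hAc : ∀ i j, ContinuousOn (fun t => A t i j) (Ici (0:ℝ)))
    (G : ℝ → Matrix ι ι ℝ)
    (hG : ∀ t ∈ Ici (0:ℝ), ∀ i j, HasDerivWithinAt (fun s => G s i j)
      (((A t)ᵀ * G t + G t * A t + G t * K' * G t) i j) (Ici (0:ℝ)) t)
    (hG0 : (G 0)ᵀ = G 0) :
    ∀ b ∈ Ici (0:ℝ), (G b)ᵀ = G b := by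
  intro b hb
  have hGc : ∀ i j, ContinuousOn (fun t => G t i j) (Ici (0:ℝ)) :=
    fun i j u hu => (hG u hu i j).continuousWithinAt
  obtain ⟨aA, haA0, haA⟩ := exists_entry_bound A (Icc 0 b) isCompact_Icc
    (fun i j => (hAc i j).mono Icc_subset_Ici_self)
  obtain ⟨aG, haG0, haG⟩ := exists_entry_bound G (Icc 0 b) isCompact_Icc
    (fun i j => (hGc i j).mono Icc_subset_Ici_self)
  obtain ⟨kK, hkK0, hkK⟩ := exists_entry_bound (fun _ => K') (Icc 0 b)
    isCompact_Icc (fun i j => continuousOn_const)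
  set N := (Fintype.card ι : ℝ) with hN
  have hN0 : (0:ℝ) ≤ N := Nat.cast_nonneg _
  set Kc := 2 * (N * aA) + 2 * (N * (N * aG * kK)) with hKc
  set f : ℝ → (ι → ι → ℝ) := fun t i j => G t i j - G t j i with hf
  set f' : ℝ → (ι → ι → ℝ) := fun t i j =>
    ((A t)ᵀ * G t + G t * A t + G t * K' * G t) i j
      - ((A t)ᵀ * G t + G t * A t + G t * K' * G t) j i with hf'
  have hcont : ContinuousOn f (Icc 0 b) :=
    continuousOn_pi.2 fun i => continuousOn_pi.2 fun j =>
      (((hGc i j).sub (hGc j i)).mono Icc_subset_Ici_self)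
  have hder : ∀ t ∈ Ico (0:ℝ) b, ∀ i j,
      HasDerivWithinAt (fun u => f u i j) (f' t i j) (Ici t) t := by
    intro t ht i j
    exact ((hG t ht.1 i j).sub (hG t ht.1 j i)).mono (Ici_subset_Ici.2 ht.1)
  have hbound : ∀ t ∈ Ico (0:ℝ) b, ‖f' t‖ ≤ Kc * ‖f t‖ + 0 := by
    intro t ht
    have htI : t ∈ Icc (0:ℝ) b := ⟨ht.1, ht.2.le⟩
    set Hm : Matrix ι ι ℝ := G t - (G t)ᵀ with hHm
    have hHent : ∀ i j, |Hm i j| ≤ ‖f t‖ := by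
      intro i j
      have := abs_le_pi2norm (f t) i j
      simpa [hHm, Matrix.sub_apply, Matrix.transpose_apply, hf] using this
    have hAent : ∀ i j, |(A t) i j| ≤ aA := fun i j => haA t htI i j
    have hAtent : ∀ i j, |(A t)ᵀ i j| ≤ aA := fun i j => haA t htI j i
    have hGent : ∀ i j, |(G t) i j| ≤ aG := fun i j => haG t htI i j
    have hGtent : ∀ i j, |(G t)ᵀ i j| ≤ aG := fun i j => haG t htI j i
    have hKent : ∀ i j, |K' i j| ≤ kK := fun i j => hkK t htI i j
    have hid : ((A t)ᵀ * G t + G t * A t + G t * K' * G t)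
          - ((A t)ᵀ * G t + G t * A t + G t * K' * G t)ᵀ
        = (A t)ᵀ * Hm + Hm * A t + (G t * K') * Hm + (Hm * K') * (G t)ᵀ := by
      have h1 : ((A t)ᵀ * G t + G t * A t + G t * K' * G t)ᵀ
          = (G t)ᵀ * A t + (A t)ᵀ * (G t)ᵀ + (G t)ᵀ * K' * (G t)ᵀ := by
        simp [Matrix.transpose_mul, Matrix.transpose_add, hK', Matrix.mul_assoc]
      rw [h1, hHm]
      noncomm_ring
    have hfeq : ∀ i j, f' t i j
        = ((A t)ᵀ * Hm + Hm * A t + (G t * K') * Hm + (Hm * K') * (G t)ᵀ) i j := by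
      intro i j
      have h2 := congrFun (congrFun hid i) j
      simp only [Matrix.sub_apply, Matrix.transpose_apply] at h2
      simpa [hf'] using h2
    refine pi2norm_le (by positivity) ?_
    intro i j
    rw [hfeq i j]
    have t1 := entry_mul_le ((A t)ᵀ) Hm haA0 hAtent hHent i j
    have t2 := entry_mul_le Hm (A t) (norm_nonneg _) hHent hAent i j
    have t3p : ∀ i' j', |(G t * K') i' j'| ≤ N * aG * kK :=
      fun i' j' => entry_mul_le (G t) K' haG0 hGent hKent i' j'
    have t3 := entry_mul_le (G t * K') Hm (by positivity) t3p hHent i j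
    have t4p : ∀ i' j', |(Hm * K') i' j'| ≤ N * ‖f t‖ * kK :=
      fun i' j' => entry_mul_le Hm K' (norm_nonneg _) hHent hKent i' j'
    have t4 := entry_mul_le (Hm * K') ((G t)ᵀ) (by positivity) t4p hGtent i j
    have tri : |((A t)ᵀ * Hm + Hm * A t + (G t * K') * Hm + (Hm * K') * (G t)ᵀ) i j|
        ≤ |((A t)ᵀ * Hm) i j| + |(Hm * A t) i j| + |((G t * K') * Hm) i j|
          + |((Hm * K') * (G t)ᵀ) i j| := by
      simp only [Matrix.add_apply]
      exact (abs_add_le _ _).trans (add_le_add ((abs_add_le _ _).trans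
        (add_le_add ((abs_add_le _ _)) le_rfl)) le_rfl)
    refine tri.trans ?_
    have heq : Kc * ‖f t‖ + 0
        = (Fintype.card ι : ℝ) * aA * ‖f t‖ + (Fintype.card ι : ℝ) * ‖f t‖ * aA
          + (Fintype.card ι : ℝ) * (N * aG * kK) * ‖f t‖
          + (Fintype.card ι : ℝ) * (N * ‖f t‖ * kK) * aG := by
      rw [hKc, hN]; ring
    rw [heq]
    exact add_le_add (add_le_add (add_le_add t1 t2) t3) t4
  have hδ : ‖f 0‖ ≤ 0 := by
    have h0 : f 0 = 0 := by
      funext i j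
      have h2 := congrFun (congrFun hG0 i) j
      simp only [Matrix.transpose_apply] at h2
      simp [hf, h2]
    rw [h0, norm_zero]
  have hfin := gron f f' hcont hder hbound hδ b ⟨hb, le_refl b⟩
  rw [gronwallBound_ε0_δ0] at hfin
  have hfb : f b = 0 := by
    have := le_antisymm hfin (norm_nonneg _)
    exact norm_eq_zero.mp this
  ext i j
  have h2 := congrFun (congrFun hfb j) i
  simp only [hf, Pi.zero_apply] at h2
  rw [Matrix.transpose_apply]
  linarith

lemma posDef_of_riccati (A : ℝ → Matrix ι ι ℝ) (K' : Matrix ι ι ℝ)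
    (hAc : ∀ i j, ContinuousOn (fun t => A t i j) (Ici (0:ℝ)))
    (G : ℝ → Matrix ι ι ℝ)
    (hG : ∀ t ∈ Ici (0:ℝ), ∀ i j, HasDerivWithinAt (fun s => G s i j)
      (((A t)ᵀ * G t + G t * A t + G t * K' * G t) i j) (Ici (0:ℝ)) t)
    (hG0 : (G 0).PosDef)
    (hsymm : ∀ t ∈ Ici (0:ℝ), (G t)ᵀ = G t) :
    ∀ t ∈ Ici (0:ℝ), (G t).PosDef := by
  by_contra hcon
  push_neg at hcon
  obtain ⟨t₀, ht₀, hbad⟩ := hcon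
  have hherm : ∀ t ∈ Ici (0:ℝ), (G t).IsHermitian := fun t ht => by
    rw [Matrix.IsHermitian, conjTranspose_eq_transpose_of_trivial]
    exact hsymm t ht
  have hι : Nonempty ι := by
    by_contra hne
    rw [not_nonempty_iff] at hne
    exact hbad ⟨hherm t₀ ht₀, fun x hx => absurd (Finsupp.ext fun i => hne.elim i) hx⟩
  set N := (Fintype.card ι : ℝ) with hNdef
  have hN : 0 < N := by
    rw [hNdef]
    exact_mod_cast Fintype.card_pos
  set bad := {t : ℝ | 0 ≤ t ∧ ¬ (G t).PosDef} with hbaddef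
  have hne : bad.Nonempty := ⟨t₀, ht₀, hbad⟩
  have hbdd : BddBelow bad := ⟨0, fun u hu => hu.1⟩
  set T := sInf bad with hTdef
  have hT0 : 0 ≤ T := le_csInf hne fun u hu => hu.1
  have hpre : ∀ s, 0 ≤ s → s < T → (G s).PosDef := by
    intro s h0 hsT
    by_contra hc
    exact absurd (csInf_le hbdd ⟨h0, hc⟩) (not_le.2 hsT)
  have hsimp : ∀ u, (G u).PosDef →
      -((G u)⁻¹ * ((A u)ᵀ * G u + G u * A u + G u * K' * G u) * (G u)⁻¹)
        = -((G u)⁻¹ * (A u)ᵀ) - A u * (G u)⁻¹ - K' := by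
    intro u hP
    have hdet : IsUnit (G u).det := hP.det_pos.ne'.isUnit
    have h2 : (G u)⁻¹ * G u = 1 := Matrix.nonsing_inv_mul _ hdet
    have e : (G u)⁻¹ * ((A u)ᵀ * G u + G u * A u + G u * K' * G u) * (G u)⁻¹
        = (G u)⁻¹ * (A u)ᵀ + A u * (G u)⁻¹ + K' := by
      rw [Matrix.mul_add, Matrix.mul_add, Matrix.add_mul, Matrix.add_mul]
      simp only [← Matrix.mul_assoc]
      rw [Matrix.mul_nonsing_inv_cancel_right _ _ hdet,
        Matrix.mul_nonsing_inv_cancel_right _ _ hdet, h2, Matrix.one_mul,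
        Matrix.one_mul]
    rw [e]
    noncomm_ring
  have hGc : ∀ i j, ContinuousOn (fun t => G t i j) (Ici (0:ℝ)) :=
    fun i j u hu => (hG u hu i j).continuousWithinAt
  obtain ⟨aA, haA0, haA⟩ := exists_entry_bound A (Icc 0 T) isCompact_Icc
    (fun i j => (hAc i j).mono Icc_subset_Ici_self)
  obtain ⟨kK, hkK0, hkK⟩ := exists_entry_bound (fun _ => K') (Icc 0 T)
    isCompact_Icc (fun i j => continuousOn_const)
  have hkK' : ∀ i j, |K' i j| ≤ kK := fun i j => hkK 0 ⟨le_refl 0, hT0⟩ i j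
  -- the key fact : G T is positive definite
  have hGT : (G T).PosDef := by
    rcases eq_or_lt_of_le hT0 with h | hTpos
    · rwa [← h]
    -- Gronwall bound on the entries of the inverse on [0, T)
    set δ := ‖(fun i j => (G 0)⁻¹ i j : ι → ι → ℝ)‖ with hδdef
    set Kc := 2 * (N * aA) + 1 with hKcdef
    have hKc0 : (0:ℝ) < Kc := by positivity
    set m := δ * Real.exp (Kc * T) + kK / Kc * (Real.exp (Kc * T) - 1) + 1
      with hmdef
    have hexp1 : 1 ≤ Real.exp (Kc * T) := Real.one_le_exp (by positivity)
    have hδ0 : 0 ≤ δ := norm_nonneg _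
    have hm : 0 < m := by
      have h1 : 0 ≤ kK / Kc := by positivity
      have h2 : 0 ≤ δ * Real.exp (Kc * T) := mul_nonneg hδ0 (by linarith)
      have h3 : 0 ≤ kK / Kc * (Real.exp (Kc * T) - 1) :=
        mul_nonneg h1 (by linarith)
      rw [hmdef]
      linarith
    have hSb : ∀ s, 0 ≤ s → s < T → ∀ i j, |(G s)⁻¹ i j| ≤ m := by
      intro s hs0 hsT i j
      set f : ℝ → (ι → ι → ℝ) := fun u i j => (G u)⁻¹ i j with hfdef
      have hposu : ∀ u ∈ Icc (0:ℝ) s, (G u).PosDef :=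
        fun u hu => hpre u hu.1 (lt_of_le_of_lt hu.2 hsT)
      have hder' : ∀ u ∈ Icc (0:ℝ) s, ∀ i' j',
          HasDerivWithinAt (fun w => f w i' j')
            ((-((G u)⁻¹ * (A u)ᵀ) - A u * (G u)⁻¹ - K') i' j') (Ici 0) u := by
        intro u hu i' j'
        have hunit : IsUnit (G u) :=
          (Matrix.isUnit_iff_isUnit_det _).2 (hposu u hu).det_pos.ne'.isUnit
        have h0 := entrywise_deriv_inv hunit (fun a b => hG u hu.1 a b) i' j'
        rw [hsimp u (hposu u hu)] at h0
        exact h0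
      have hcont : ContinuousOn f (Icc 0 s) :=
        continuousOn_pi.2 fun i' => continuousOn_pi.2 fun j' => fun u hu =>
          ((hder' u hu i' j').continuousWithinAt).mono Icc_subset_Ici_self
      have hboundf : ∀ u ∈ Ico (0:ℝ) s,
          ‖(fun i' j' => (-((G u)⁻¹ * (A u)ᵀ) - A u * (G u)⁻¹ - K') i' j'
            : ι → ι → ℝ)‖ ≤ Kc * ‖f u‖ + kK := by
        intro u hu
        have huI : u ∈ Icc (0:ℝ) T := ⟨hu.1, (hu.2.trans hsT).le⟩
        have hAe : ∀ i' j', |A u i' j'| ≤ aA := haA u huI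
        have hAte : ∀ i' j', |(A u)ᵀ i' j'| ≤ aA := fun i' j' => haA u huI j' i'
        have hSe : ∀ i' j', |(G u)⁻¹ i' j'| ≤ ‖f u‖ :=
          fun i' j' => abs_le_pi2norm (f u) i' j'
        refine pi2norm_le (by positivity) ?_
        intro i' j'
        have t1 := entry_mul_le ((G u)⁻¹) ((A u)ᵀ) (norm_nonneg (f u)) hSe hAte i' j'
        have t2 := entry_mul_le (A u) ((G u)⁻¹) haA0 hAe hSe i' j'
        have t3 : |K' i' j'| ≤ kK := hkK' i' j'
        have habs : |(-((G u)⁻¹ * (A u)ᵀ) - A u * (G u)⁻¹ - K') i' j'|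
            ≤ |((G u)⁻¹ * (A u)ᵀ) i' j'| + |(A u * (G u)⁻¹) i' j'| + |K' i' j'| := by
          simp only [Matrix.sub_apply, Matrix.neg_apply]
          calc |-(((G u)⁻¹ * (A u)ᵀ) i' j') - (A u * (G u)⁻¹) i' j' - K' i' j'|
              ≤ |-(((G u)⁻¹ * (A u)ᵀ) i' j') - (A u * (G u)⁻¹) i' j'| + |K' i' j'| :=
                abs_sub _ _
            _ ≤ |-(((G u)⁻¹ * (A u)ᵀ) i' j')| + |(A u * (G u)⁻¹) i' j'| + |K' i' j'| := by
                have := abs_sub (-(((G u)⁻¹ * (A u)ᵀ) i' j')) ((A u * (G u)⁻¹) i' j')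
                linarith
            _ = |((G u)⁻¹ * (A u)ᵀ) i' j'| + |(A u * (G u)⁻¹) i' j'| + |K' i' j'| := by
                rw [abs_neg]
        have heq : Kc * ‖f u‖ + kK
            = N * ‖f u‖ * aA + N * aA * ‖f u‖ + kK + ‖f u‖ := by
          rw [hKcdef]; ring
        have hfn : 0 ≤ ‖f u‖ := norm_nonneg _
        rw [hNdef] at heq
        linarith [habs, t1, t2, t3]
      have hgr := gron f
        (fun u i' j' => (-((G u)⁻¹ * (A u)ᵀ) - A u * (G u)⁻¹ - K') i' j')
        hcont
        (fun u hu i' j' =>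
          (hder' u ⟨hu.1, hu.2.le⟩ i' j').mono (Ici_subset_Ici.2 hu.1))
        hboundf (le_of_eq rfl) s ⟨hs0, le_refl s⟩
      have hgb : gronwallBound δ Kc kK s ≤ m - 1 := by
        rw [gronwallBound_of_K_ne_0 hKc0.ne', hmdef]
        have hes : Real.exp (Kc * s) ≤ Real.exp (Kc * T) :=
          Real.exp_le_exp.2 (mul_le_mul_of_nonneg_left hsT.le hKc0.le)
        have h1 : 0 ≤ kK / Kc := by positivity
        nlinarith [Real.exp_pos (Kc * s)]
      exact (abs_le_pi2norm (f s) i j).trans (hgr.trans (by linarith))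
    -- pass to the limit
    refine .of_dotProduct_mulVec_pos (hherm T hT0) fun x hx => ?_
    rw [star_trivial]
    have hxx : 0 < x ⬝ᵥ x :=
      lt_of_le_of_ne (dotProduct_self_nonneg' x)
        (fun h => hx (dotProduct_self_eq_zero.mp h.symm))
    have hkey : ∀ s ∈ Ico (0:ℝ) T, x ⬝ᵥ x ≤ (N * m) * (x ⬝ᵥ G s *ᵥ x) := by
      intro s hs
      exact quad_lower (G s) (hpre s hs.1 hs.2) hm (hSb s hs.1 hs.2) x
    have hcw : ∀ i j, ContinuousWithinAt (fun s => G s i j) (Ici (0:ℝ)) T :=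
      fun i j => (hG T hT0 i j).continuousWithinAt
    have hφ : Tendsto (fun s => x ⬝ᵥ G s *ᵥ x) (nhdsWithin T (Ici 0))
        (nhds (x ⬝ᵥ G T *ᵥ x)) := by
      have h1 : Tendsto (fun s => ∑ i, x i * ∑ j, G s i j * x j)
          (nhdsWithin T (Ici 0)) (nhds (∑ i, x i * ∑ j, G T i j * x j)) :=
        tendsto_finset_sum _ fun i _ =>
          (tendsto_const_nhds.mul (tendsto_finset_sum _ fun j _ =>
            ((hcw i j).mul tendsto_const_nhds)))
      have he : ∀ u : ℝ, x ⬝ᵥ G u *ᵥ x = ∑ i, x i * ∑ j, G u i j * x j := by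
        intro u
        simp [dotProduct, Matrix.mulVec]
      rw [show (fun s => x ⬝ᵥ G s *ᵥ x) = fun s => ∑ i, x i * ∑ j, G s i j * x j
        from funext he, he T]
      exact h1
    have hφ' : Tendsto (fun s => (N * m) * (x ⬝ᵥ G s *ᵥ x))
        (nhdsWithin T (Ico 0 T)) (nhds ((N * m) * (x ⬝ᵥ G T *ᵥ x))) :=
      (hφ.mono_left (nhdsWithin_mono T Ico_subset_Ici_self)).const_mul _
    haveI : (nhdsWithin T (Ico 0 T)).NeBot := by
      rw [nhdsWithin_Ico_eq_nhdsLT hTpos]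
      infer_instance
    have hlim : x ⬝ᵥ x ≤ (N * m) * (x ⬝ᵥ G T *ᵥ x) :=
      ge_of_tendsto hφ' (eventually_nhdsWithin_of_forall hkey)
    nlinarith [mul_pos hN hm]
  -- extension past T yields a contradiction
  set δT := ‖(fun i j => (G T)⁻¹ i j : ι → ι → ℝ)‖ + 1 with hδTdef
  have hδT : 0 < δT := by positivity
  have hlowT : ∀ x : ι → ℝ, x ⬝ᵥ x ≤ (N * δT) * (x ⬝ᵥ G T *ᵥ x) := by
    intro x
    refine quad_lower (G T) hGT hδT (fun i j => ?_) x
    exact (abs_le_pi2norm (fun i j => (G T)⁻¹ i j) i j).trans (by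
      rw [hδTdef]; linarith)
  set e := 1 / (2 * N * N * δT + 1) with hedef
  have he : 0 < e := by positivity
  have hkey2 : (N * e) * (N * δT) ≤ 1 / 2 := by
    have h3 : (N * e) * (N * δT) = (N * N * δT) / (2 * N * N * δT + 1) := by
      rw [hedef]; field_simp
    rw [h3, div_le_iff₀ (by positivity)]
    nlinarith
  have hcwP : ContinuousWithinAt
      (fun t => (fun i j => G t i j : ι → ι → ℝ)) (Ici (0:ℝ)) T :=
    continuousWithinAt_pi.2 fun i => continuousWithinAt_pi.2 fun j =>
      (hG T hT0 i j).continuousWithinAt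
  rw [Metric.continuousWithinAt_iff] at hcwP
  obtain ⟨dd, hdd0, hdd⟩ := hcwP e he
  have hupos : ∀ u, 0 ≤ u → dist u T < dd → (G u).PosDef := by
    intro u hu hud
    refine .of_dotProduct_mulVec_pos (hherm u hu) fun x hx => ?_
    rw [star_trivial]
    have hxx : 0 < x ⬝ᵥ x :=
      lt_of_le_of_ne (dotProduct_self_nonneg' x)
        (fun h => hx (dotProduct_self_eq_zero.mp h.symm))
    have hdist := hdd hu hud
    have hent : ∀ i j, |(G u - G T) i j| ≤ e := by
      intro i j
      have h1 : dist ((fun i j => G u i j : ι → ι → ℝ) i j)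
          ((fun i j => G T i j : ι → ι → ℝ) i j)
          ≤ dist ((fun i j => G u i j : ι → ι → ℝ))
            ((fun i j => G T i j : ι → ι → ℝ)) :=
        (dist_le_pi_dist _ _ j).trans (dist_le_pi_dist _ _ i)
      have h2 : |(G u - G T) i j| = dist (G u i j) (G T i j) := by
        rw [Real.dist_eq, Matrix.sub_apply]
      rw [h2]
      exact h1.trans hdist.le
    have hq := quad_abs_le (G u - G T) he.le hent x
    have hsub : x ⬝ᵥ (G u - G T) *ᵥ x = x ⬝ᵥ G u *ᵥ x - x ⬝ᵥ G T *ᵥ x := by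
      rw [Matrix.sub_mulVec, dotProduct_sub]
    rw [hsub] at hq
    have hl := hlowT x
    obtain ⟨hq1, _⟩ := abs_le.mp hq
    -- combine the bounds
    have hNδT : 0 < N * δT := mul_pos hN hδT
    have p1 : (N * δT) * (x ⬝ᵥ G u *ᵥ x - x ⬝ᵥ G T *ᵥ x)
        ≥ (N * δT) * (-((N : ℝ) * e * (x ⬝ᵥ x))) := by
      apply mul_le_mul_of_nonneg_left _ hNδT.le
      calc -((N:ℝ) * e * (x ⬝ᵥ x)) = -((Fintype.card ι : ℝ) * e * (x ⬝ᵥ x)) := by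
            rw [hNdef]
        _ ≤ x ⬝ᵥ G u *ᵥ x - x ⬝ᵥ G T *ᵥ x := by
            have : (Fintype.card ι : ℝ) * e * (x ⬝ᵥ x)
                = ((Fintype.card ι : ℝ) * e) * (x ⬝ᵥ x) := by ring
            linarith [hq1]
    have p2 : (N * e) * (N * δT) * (x ⬝ᵥ x) ≤ (1/2) * (x ⬝ᵥ x) :=
      mul_le_mul_of_nonneg_right hkey2 hxx.le
    by_contra hcon2
    push_neg at hcon2
    have h6 : (N * δT) * (x ⬝ᵥ G u *ᵥ x) ≤ 0 :=
      mul_nonpos_of_nonneg_of_nonpos hNδT.le hcon2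
    rw [mul_sub, mul_neg] at p1
    have e2 : N * δT * (N * e * (x ⬝ᵥ x)) = N * e * (N * δT) * (x ⬝ᵥ x) := by
      ring
    clear_value N δT e
    linarith [p1, p2, hl, h6, hxx, e2]
  have h2 : sInf bad < T + dd := by
    rw [← hTdef]; linarith
  obtain ⟨u, hu, hult⟩ := exists_lt_of_csInf_lt hne h2
  have huT : T ≤ u := csInf_le hbdd hu
  refine hu.2 (hupos u hu.1 ?_)
  rw [Real.dist_eq, abs_of_nonneg (by linarith)]
  linarith

lemma inv_riccati_simp (A' A K' P : Matrix ι ι ℝ) (hdet : IsUnit P.det) :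
    -(P⁻¹ * (A' * P + P * A + P * K' * P) * P⁻¹)
      = -(P⁻¹ * A') - A * P⁻¹ - K' := by
  have h2 : P⁻¹ * P = 1 := Matrix.nonsing_inv_mul _ hdet
  have e : P⁻¹ * (A' * P + P * A + P * K' * P) * P⁻¹
      = P⁻¹ * A' + A * P⁻¹ + K' := by
    rw [Matrix.mul_add, Matrix.mul_add, Matrix.add_mul, Matrix.add_mul]
    simp only [← Matrix.mul_assoc]
    rw [Matrix.mul_nonsing_inv_cancel_right _ _ hdet,
      Matrix.mul_nonsing_inv_cancel_right _ _ hdet, h2, Matrix.one_mul,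
      Matrix.one_mul]
  rw [e]
  noncomm_ring

/-- If `Γ₂, M̃` are symmetric, `B − Γ₁` is symmetric positive
semidefinite, `C(t)` is continuous on `[0,∞)`, and `G` solves the matrix
Riccati equation `dG/dt = (Γ₂+M̃−C(t)ᵀ)G + G(Γ₂+M̃−C(t)) + G(Γ₁−B)G` with
`G(0)` symmetric positive definite, then `G(t)` is symmetric positive definite
for all `t ≥ 0`, and `Σ(t) := G(t)⁻¹` solves the differential Lyapunov equation
`dΣ/dt = −Σ(Γ₂+M̃−C(t)ᵀ) − (Γ₂+M̃−C(t))Σ − (Γ₁−B)` with `Σ(0) = G(0)⁻¹`. -/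
theorem riccati_solution_posDef_and_inverse_solves_lyapunov
    (n : ℕ) (Γ₁ Γ₂ Mt B : Matrix (Fin n ⊕ Fin n) (Fin n ⊕ Fin n) ℝ)
    (hΓ₂ : Γ₂.IsSymm) (hMt : Mt.IsSymm) (hBΓ₁ : (B - Γ₁).PosSemidef)
    (C : ℝ → Matrix (Fin n ⊕ Fin n) (Fin n ⊕ Fin n) ℝ)
    (hC : ContinuousOn C (Ici (0 : ℝ)))
    (G : ℝ → Matrix (Fin n ⊕ Fin n) (Fin n ⊕ Fin n) ℝ)
    (hG : ∀ t ∈ Ici (0 : ℝ), ∀ i j, HasDerivWithinAt (fun s => G s i j)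
      (((Γ₂ + Mt - (C t)ᵀ) * G t + G t * (Γ₂ + Mt - C t)
        + G t * (Γ₁ - B) * G t) i j) (Ici (0 : ℝ)) t)
    (hG0 : (G 0).PosDef) :
    (∀ t ∈ Ici (0 : ℝ), (G t).PosDef)
      ∧ (∀ t ∈ Ici (0 : ℝ), ∀ i j, HasDerivWithinAt (fun s => (G s)⁻¹ i j)
          ((-((G t)⁻¹ * (Γ₂ + Mt - (C t)ᵀ)) - (Γ₂ + Mt - C t) * (G t)⁻¹
            - (Γ₁ - B)) i j) (Ici (0 : ℝ)) t)
      ∧ (fun t => (G t)⁻¹) 0 = (G 0)⁻¹ := by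
  have hA'eq : ∀ t : ℝ, Γ₂ + Mt - (C t)ᵀ = (Γ₂ + Mt - C t)ᵀ := by
    intro t
    rw [Matrix.transpose_sub, Matrix.transpose_add, hΓ₂.eq, hMt.eq]
  have hK'symm : (Γ₁ - B)ᵀ = Γ₁ - B := by
    have h := hBΓ₁.1
    rw [Matrix.IsHermitian, conjTranspose_eq_transpose_of_trivial] at h
    have h2 : Γ₁ - B = -(B - Γ₁) := (neg_sub B Γ₁).symm
    rw [h2, Matrix.transpose_neg, h]
  have hAc : ∀ i j, ContinuousOn (fun t => (Γ₂ + Mt - C t) i j) (Ici (0:ℝ)) := by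
    intro i j
    have hCc : ContinuousOn (fun t => C t i j) (Ici (0:ℝ)) := by
      have h1 : Continuous
          (fun M : Matrix (Fin n ⊕ Fin n) (Fin n ⊕ Fin n) ℝ => M i j) :=
        (continuous_apply j).comp (continuous_apply i)
      exact h1.comp_continuousOn hC
    have h1 : ContinuousOn (fun t => (Γ₂ + Mt) i j - C t i j) (Ici (0:ℝ)) :=
      continuousOn_const.sub hCc
    exact h1
  have hG' : ∀ t ∈ Ici (0:ℝ), ∀ i j, HasDerivWithinAt (fun s => G s i j)
      (((Γ₂ + Mt - C t)ᵀ * G t + G t * (Γ₂ + Mt - C t)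
        + G t * (Γ₁ - B) * G t) i j) (Ici (0:ℝ)) t := by
    intro t ht i j
    have h := hG t ht i j
    rwa [hA'eq t] at h
  have hG0symm : (G 0)ᵀ = G 0 := by
    have h := hG0.1
    rwa [Matrix.IsHermitian, conjTranspose_eq_transpose_of_trivial] at h
  have hsymmAll : ∀ t ∈ Ici (0:ℝ), (G t)ᵀ = G t :=
    isSymm_of_riccati (fun t => Γ₂ + Mt - C t) (Γ₁ - B) hK'symm hAc G hG' hG0symm
  have hpos : ∀ t ∈ Ici (0:ℝ), (G t).PosDef :=
    posDef_of_riccati (fun t => Γ₂ + Mt - C t) (Γ₁ - B) hAc G hG' hG0 hsymmAll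
  refine ⟨hpos, ?_, rfl⟩
  intro t ht i j
  have hdet : IsUnit (G t).det := (hpos t ht).det_pos.ne'.isUnit
  have hunit : IsUnit (G t) := (Matrix.isUnit_iff_isUnit_det _).2 hdet
  have h0 := entrywise_deriv_inv hunit (fun a b => hG t ht a b) i j
  rwa [inv_riccati_simp (Γ₂ + Mt - (C t)ᵀ) (Γ₂ + Mt - C t) (Γ₁ - B) (G t) hdet]
    at h0
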